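/- In the degree-energy process with a single threshold β, the number of distinct degree values (equivalence classes under equal degree) is non-increasing from G^{(t)} to G^{(t+1)} for t ≥ 1. -/

import Mathlib

/-- Degree of a vertex, as the natural cardinality of its neighbor set. -/
noncomputable def deg {V : Type*} (G : SimpleGraph V) (v : V) : ℕ :=
  (G.neighborSet v).ncard

/-- One step of the degree-energy process with a single threshold `β`. -/
noncomputable def degStep {V : Type*} (f : ℕ → ℕ → ℝ) (β : ℝ) (G : SimpleGraph V) :
    SimpleGraph V :=
  SimpleGraph.fromRel (fun u v => β ≤ f (deg G u) (deg G v))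

lemma degStep_neighborSet {V : Type*} (f : ℕ → ℕ → ℝ) (β : ℝ) (G : SimpleGraph V) (x : V) :
    (degStep f β G).neighborSet x =
      {u | β ≤ f (deg G x) (deg G u) ∨ β ≤ f (deg G u) (deg G x)} \ {x} := by
  ext u
  simp only [SimpleGraph.mem_neighborSet, degStep, SimpleGraph.fromRel_adj,
    Set.mem_diff, Set.mem_setOf_eq, Set.mem_singleton_iff]
  constructor
  · rintro ⟨h1, h2⟩; exact ⟨h2, fun h => h1 h.symm⟩
  · rintro ⟨h2, h1⟩; exact ⟨fun h => h1 h.symm, h2⟩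

lemma deg_degStep_congr {V : Type*} [Fintype V] (f : ℕ → ℕ → ℝ) (β : ℝ) (G : SimpleGraph V)
    {v w : V} (h : deg G v = deg G w) :
    deg (degStep f β G) v = deg (degStep f β G) w := by
  classical
  unfold deg
  rw [degStep_neighborSet, degStep_neighborSet, h]
  set S : Set V := {u | β ≤ f (deg G w) (deg G u) ∨ β ≤ f (deg G u) (deg G w)} with hS
  have hiff : v ∈ S ↔ w ∈ S := by
    simp only [hS, Set.mem_setOf_eq, h]
  have hfin : S.Finite := Set.toFinite _
  by_cases hv : v ∈ S
  · rw [Set.ncard_diff_singleton_of_mem hv,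
      Set.ncard_diff_singleton_of_mem (hiff.mp hv)]
  · have hw : w ∉ S := fun hw => hv (hiff.mpr hw)
    rw [Set.diff_singleton_eq_self hv, Set.diff_singleton_eq_self hw]

theorem stmt_15 {V : Type*} [Fintype V] (f : ℕ → ℕ → ℝ) (β : ℝ)
    (hsymm : ∀ x y, f x y = f y x)
    (hmono : ∀ x x' y y', x ≤ x' → y ≤ y' → f x y ≤ f x' y')
    (G₀ : SimpleGraph V) (t : ℕ) (ht : 1 ≤ t) :
    (Finset.image (deg ((degStep f β)^[t + 1] G₀)) Finset.univ).card ≤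
      (Finset.image (deg ((degStep f β)^[t] G₀)) Finset.univ).card := by
  classical
  set G := (degStep f β)^[t] G₀ with hG
  have hit : (degStep f β)^[t + 1] G₀ = degStep f β G := by
    rw [Function.iterate_succ_apply']
  rw [hit]
  set φ : ℕ → ℕ := fun d => if h : ∃ v : V, deg G v = d then deg (degStep f β G) h.choose else 0
    with hφ
  apply Finset.card_le_card_of_surjOn φ
  intro b hb
  simp only [Finset.coe_image, Finset.coe_univ, Set.image_univ, Set.mem_range] at hb ⊢
  obtain ⟨v, hv⟩ := hb
  refine ⟨deg G v, ⟨v, rfl⟩, ?_⟩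
  have hex : ∃ u : V, deg G u = deg G v := ⟨v, rfl⟩
  simp only [hφ, dif_pos hex]
  rw [deg_degStep_congr f β G hex.choose_spec, hv]
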